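/- Let n ≥ 2 and r ≥ 1 be integers and let σ₂ = ⟨(1,0,0),(1,0,n+r+2),(2,2n+3,0),(2,2n+3,2r+1)⟩ ⊆ ℝ³ (a maximal cone of the dual Newton polyhedron of the B₍₂ᵣ,ₙ₎-singularity x^{n+r+2}y − x^{2n+3}z + y²z = 0). Then the Hilbert basis of σ₂ is exactly { (1,y,z) ∈ ℤ³ : 0 ≤ y ≤ n+1, 0 ≤ z ≤ n+r+2−y } ∪ { (2,2n+3,j) : 0 ≤ j ≤ 2r+1 }; that is, these vectors are precisely the irreducible elements of S_{σ₂} = σ₂ ∩ ℤ³, and they generate the monoid S_{σ₂}. -/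

import Mathlib

open scoped BigOperators

/-- The real-coordinate vector attached to an integer vector. -/
def toR {n : ℕ} (u : Fin n → ℤ) : Fin n → ℝ := fun j => (u j : ℝ)

/-- The rational polyhedral cone generated by integer vectors `v 0, …, v (r-1)`:
all nonnegative real linear combinations of the generators. -/
def coneOf {n r : ℕ} (v : Fin r → (Fin n → ℤ)) : Set (Fin n → ℝ) :=
  { x | ∃ c : Fin r → ℝ, (∀ i, 0 ≤ c i) ∧ x = ∑ i, c i • toR (v i) }

/-- The lattice points of a subset of `ℝⁿ`: `S_σ = σ ∩ ℤⁿ`. -/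
def latticePoints {n : ℕ} (σ : Set (Fin n → ℝ)) : Set (Fin n → ℤ) :=
  { u | toR u ∈ σ }

/-- `u` is an irreducible element of `S`: it is a nonzero element of `S` which cannot be
written as the sum of two nonzero elements of `S`. -/
def IsIrreducibleElt {n : ℕ} (S : Set (Fin n → ℤ)) (u : Fin n → ℤ) : Prop :=
  u ∈ S ∧ u ≠ 0 ∧ ∀ a b : Fin n → ℤ, a ∈ S → b ∈ S → u = a + b → a = 0 ∨ b = 0

/-- The Hilbert basis of (the monoid of lattice points of) a cone:
the set of its irreducible elements. -/
def hilbertBasis {n : ℕ} (S : Set (Fin n → ℤ)) : Set (Fin n → ℤ) :=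
  { u | IsIrreducibleElt S u }

/-! ### Auxiliary material for Statement 9 -/

/-- The inequality description of the lattice points of the cone `σ₂`. -/
def inT (n r : ℤ) (u : Fin 3 → ℤ) : Prop :=
  0 ≤ u 1 ∧ 0 ≤ u 2 ∧ 2 * u 1 ≤ (2*n+3) * u 0 ∧ u 1 + u 2 ≤ (n+r+2) * u 0

/-- The claimed Hilbert basis, as a set. -/
def Bset (n r : ℤ) : Set (Fin 3 → ℤ) :=
  { u | u 0 = 1 ∧ 0 ≤ u 1 ∧ u 1 ≤ n + 1 ∧ 0 ≤ u 2 ∧ u 2 ≤ n + r + 2 - u 1 } ∪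
  { u | ∃ j : ℤ, 0 ≤ j ∧ j ≤ 2 * r + 1 ∧ u = ![2, 2 * n + 3, j] }

lemma inT_x_nonneg {n r : ℤ} (hn : 2 ≤ n) {u : Fin 3 → ℤ} (h : inT n r u) : 0 ≤ u 0 := by
  obtain ⟨h1, h2, h3, h4⟩ := h
  by_contra hc
  push_neg at hc
  have hM : (0:ℤ) < 2*n+3 := by linarith
  have : (2*n+3) * u 0 < 0 := mul_neg_of_pos_of_neg hM (by omega)
  omega

lemma inT_zero {n r : ℤ} {u : Fin 3 → ℤ} (h : inT n r u)
    (h0 : u 0 = 0) : u = 0 := by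
  obtain ⟨h1, h2, h3, h4⟩ := h
  rw [h0] at h3 h4
  simp at h3 h4
  funext i
  fin_cases i <;> simp [h0] <;> omega

lemma S_subset_T {n r : ℤ} (hn : 2 ≤ n) (hr : 1 ≤ r) {u : Fin 3 → ℤ}
    (h : u ∈ latticePoints (coneOf
      ![![1, 0, 0], ![1, 0, n + r + 2], ![2, 2 * n + 3, 0], ![2, 2 * n + 3, 2 * r + 1]])) :
    inT n r u := by
  obtain ⟨c, hc, hx⟩ := h
  have h0 := congrFun hx 0
  have h1 := congrFun hx 1
  have h2 := congrFun hx 2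
  simp [toR, Fin.sum_univ_four, Matrix.cons_val_zero, Matrix.cons_val_one, Matrix.head_cons,
    Matrix.vecHead, Matrix.vecTail] at h0 h1 h2
  have hn' : (2:ℝ) ≤ (n:ℝ) := by exact_mod_cast hn
  have hr' : (1:ℝ) ≤ (r:ℝ) := by exact_mod_cast hr
  have hc0 := hc 0; have hc1 := hc 1; have hc2 := hc 2; have hc3 := hc 3
  refine ⟨?_, ?_, ?_, ?_⟩
  · have : (0:ℝ) ≤ (u 1 : ℝ) := by
      rw [h1]; nlinarith [mul_nonneg (by linarith : (0:ℝ) ≤ 2*(n:ℝ)+3) hc2,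
        mul_nonneg (by linarith : (0:ℝ) ≤ 2*(n:ℝ)+3) hc3]
    exact_mod_cast this
  · have : (0:ℝ) ≤ (u 2 : ℝ) := by
      rw [h2]; nlinarith [mul_nonneg (by linarith : (0:ℝ) ≤ (n:ℝ)+(r:ℝ)+2) hc1,
        mul_nonneg (by linarith : (0:ℝ) ≤ 2*(r:ℝ)+1) hc3]
    exact_mod_cast this
  · have : 2 * (u 1 : ℝ) ≤ (2*(n:ℝ)+3) * (u 0 : ℝ) := by
      rw [h0, h1]
      nlinarith [mul_nonneg (by linarith : (0:ℝ) ≤ 2*(n:ℝ)+3) hc0,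
        mul_nonneg (by linarith : (0:ℝ) ≤ 2*(n:ℝ)+3) hc1]
    exact_mod_cast this
  · have : (u 1 : ℝ) + (u 2 : ℝ) ≤ ((n:ℝ)+(r:ℝ)+2) * (u 0 : ℝ) := by
      rw [h0, h1, h2]
      nlinarith [mul_nonneg (by linarith : (0:ℝ) ≤ (n:ℝ)+(r:ℝ)+2) hc0,
        mul_nonneg (by linarith : (0:ℝ) ≤ 2*(r:ℝ)+1) hc2]
    exact_mod_cast this

lemma memS_of_B1 {n r : ℤ} (hn : 2 ≤ n) (hr : 1 ≤ r) {u : Fin 3 → ℤ}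
    (h : u 0 = 1 ∧ 0 ≤ u 1 ∧ u 1 ≤ n + 1 ∧ 0 ≤ u 2 ∧ u 2 ≤ n + r + 2 - u 1) :
    u ∈ latticePoints (coneOf
      ![![1, 0, 0], ![1, 0, n + r + 2], ![2, 2 * n + 3, 0], ![2, 2 * n + 3, 2 * r + 1]]) := by
  obtain ⟨h0, hy0, hyn, hz0, hzm⟩ := h
  have hn' : (2:ℝ) ≤ (n:ℝ) := by exact_mod_cast hn
  have hr' : (1:ℝ) ≤ (r:ℝ) := by exact_mod_cast hr
  have hM : (0:ℝ) < 2*(n:ℝ)+3 := by linarith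
  have hm : (0:ℝ) < (n:ℝ)+(r:ℝ)+2 := by linarith
  have h2r : (0:ℝ) < 2*(r:ℝ)+1 := by linarith
  have hy0' : (0:ℝ) ≤ (u 1 : ℝ) := by exact_mod_cast hy0
  have hyn' : (u 1 : ℝ) ≤ (n:ℝ)+1 := by exact_mod_cast hyn
  have hz0' : (0:ℝ) ≤ (u 2 : ℝ) := by exact_mod_cast hz0
  have hzm' : (u 2 : ℝ) ≤ (n:ℝ)+(r:ℝ)+2 - (u 1 : ℝ) := by
    have h' : ((u 2 : ℤ) : ℝ) ≤ ((n + r + 2 - u 1 : ℤ) : ℝ) := by exact_mod_cast hzm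
    push_cast at h'; linarith
  have h0' : (u 0 : ℝ) = 1 := by exact_mod_cast h0
  rcases le_or_gt ((2*r+1) * u 1) ((2*n+3) * u 2) with hcase | hcase
  · have hcase' : (2*(r:ℝ)+1) * (u 1:ℝ) ≤ (2*(n:ℝ)+3) * (u 2:ℝ) := by
      have h' : (((2*r+1) * u 1 : ℤ):ℝ) ≤ (((2*n+3) * u 2 : ℤ):ℝ) := by exact_mod_cast hcase
      push_cast at h'; linarith
    refine ⟨![1 - ((u 2:ℝ) - (2*(r:ℝ)+1)*(u 1:ℝ)/(2*(n:ℝ)+3))/((n:ℝ)+r+2) - 2*(u 1:ℝ)/(2*(n:ℝ)+3),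
             ((u 2:ℝ) - (2*(r:ℝ)+1)*(u 1:ℝ)/(2*(n:ℝ)+3))/((n:ℝ)+r+2), 0, (u 1:ℝ)/(2*(n:ℝ)+3)], ?_, ?_⟩
    · intro i
      fin_cases i
      · show (0:ℝ) ≤ 1 - ((u 2:ℝ) - (2*(r:ℝ)+1)*(u 1:ℝ)/(2*(n:ℝ)+3))/((n:ℝ)+r+2) - 2*(u 1:ℝ)/(2*(n:ℝ)+3)
        have key : 1 - ((u 2:ℝ) - (2*(r:ℝ)+1)*(u 1:ℝ)/(2*(n:ℝ)+3))/((n:ℝ)+r+2) - 2*(u 1:ℝ)/(2*(n:ℝ)+3)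
            = ((2*(n:ℝ)+3) * (((n:ℝ)+r+2) - (u 2:ℝ) - (u 1:ℝ))) / ((2*(n:ℝ)+3)*((n:ℝ)+r+2)) := by
          field_simp; ring
        rw [key]
        exact div_nonneg (by nlinarith) (by nlinarith)
      · show (0:ℝ) ≤ ((u 2:ℝ) - (2*(r:ℝ)+1)*(u 1:ℝ)/(2*(n:ℝ)+3))/((n:ℝ)+r+2)
        apply div_nonneg ?_ (by linarith)
        rw [sub_nonneg, div_le_iff₀ hM]
        linarith
      · exact le_refl 0
      · show (0:ℝ) ≤ (u 1:ℝ)/(2*(n:ℝ)+3)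
        exact div_nonneg hy0' (by linarith)
    · funext j
      fin_cases j <;>
        simp [toR, Fin.sum_univ_four, Matrix.cons_val_zero, Matrix.cons_val_one,
          Matrix.head_cons, Matrix.vecHead, Matrix.vecTail]
      · rw [h0']; field_simp; ring
      · field_simp
      · field_simp; ring
  · have hcase' : (2*(n:ℝ)+3) * (u 2:ℝ) ≤ (2*(r:ℝ)+1) * (u 1:ℝ) := by
      have h' : (((2*n+3) * u 2 : ℤ):ℝ) ≤ (((2*r+1) * u 1 : ℤ):ℝ) := by exact_mod_cast hcase.le
      push_cast at h'; linarith
    refine ⟨![1 - 2*(u 1:ℝ)/(2*(n:ℝ)+3), 0, (u 1:ℝ)/(2*(n:ℝ)+3) - (u 2:ℝ)/(2*(r:ℝ)+1),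
        (u 2:ℝ)/(2*(r:ℝ)+1)], ?_, ?_⟩
    · intro i
      fin_cases i
      · show (0:ℝ) ≤ 1 - 2*(u 1:ℝ)/(2*(n:ℝ)+3)
        rw [sub_nonneg, div_le_one hM]; linarith
      · exact le_refl 0
      · show (0:ℝ) ≤ (u 1:ℝ)/(2*(n:ℝ)+3) - (u 2:ℝ)/(2*(r:ℝ)+1)
        rw [sub_nonneg, div_le_div_iff₀ h2r hM]
        linarith
      · show (0:ℝ) ≤ (u 2:ℝ)/(2*(r:ℝ)+1)
        exact div_nonneg hz0' (by linarith)
    · funext j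
      fin_cases j <;>
        simp [toR, Fin.sum_univ_four, Matrix.cons_val_zero, Matrix.cons_val_one,
          Matrix.head_cons, Matrix.vecHead, Matrix.vecTail]
      · rw [h0']; field_simp; ring
      · field_simp; ring
      · field_simp

lemma memS_of_B2 {n r : ℤ} (hn : 2 ≤ n) (hr : 1 ≤ r) {j : ℤ}
    (hj0 : 0 ≤ j) (hj1 : j ≤ 2*r+1) :
    (![2, 2*n+3, j] : Fin 3 → ℤ) ∈ latticePoints (coneOf
      ![![1, 0, 0], ![1, 0, n + r + 2], ![2, 2 * n + 3, 0], ![2, 2 * n + 3, 2 * r + 1]]) := by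
  have hr' : (1:ℝ) ≤ (r:ℝ) := by exact_mod_cast hr
  have h2r : (0:ℝ) < 2*(r:ℝ)+1 := by linarith
  have h2rne : (2*(r:ℝ)+1) ≠ 0 := ne_of_gt h2r
  have hj0' : (0:ℝ) ≤ (j:ℝ) := by exact_mod_cast hj0
  have hj1' : (j:ℝ) ≤ 2*(r:ℝ)+1 := by exact_mod_cast hj1
  refine ⟨![0, 0, 1 - (j:ℝ)/(2*(r:ℝ)+1), (j:ℝ)/(2*(r:ℝ)+1)], ?_, ?_⟩
  · intro i
    fin_cases i
    · exact le_refl 0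
    · exact le_refl 0
    · show (0:ℝ) ≤ 1 - (j:ℝ)/(2*(r:ℝ)+1)
      rw [sub_nonneg, div_le_one h2r]; linarith
    · show (0:ℝ) ≤ (j:ℝ)/(2*(r:ℝ)+1)
      exact div_nonneg hj0' (by linarith)
  · funext i
    fin_cases i <;>
      simp [toR, Fin.sum_univ_four, Matrix.cons_val_zero, Matrix.cons_val_one,
        Matrix.head_cons, Matrix.vecHead, Matrix.vecTail]
    all_goals (push_cast; field_simp; try ring)

lemma sub_step {n r : ℤ} (hn : 2 ≤ n) (hr : 1 ≤ r) {u : Fin 3 → ℤ}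
    (hu : inT n r u) (hx : 1 ≤ u 0) :
    ∃ a : Fin 3 → ℤ, a ∈ Bset n r ∧ 1 ≤ a 0 ∧ a 0 ≤ 2 ∧ inT n r (u - a) := by
  obtain ⟨hy0, hz0, h3, h4⟩ := hu
  by_cases hA : 2 * u 1 = (2*n+3) * u 0
  · have hx2 : 2 ≤ u 0 := by
      rcases eq_or_lt_of_le hx with h | h
      · exfalso; rw [← h, mul_one] at hA; omega
      · exact h
    set j : ℤ := max 0 (u 1 + u 2 - (n+r+2) * u 0 + 2*r+1) with hj
    have hj0 : 0 ≤ j := le_max_left _ _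
    have hj2 : u 1 + u 2 - (n+r+2) * u 0 + 2*r+1 ≤ j := le_max_right _ _
    have hj3 : j = 0 ∨ j = u 1 + u 2 - (n+r+2) * u 0 + 2*r+1 := max_choice _ _
    have hf1 : 0 ≤ (2*n+3) * (u 0 - 2) := mul_nonneg (by linarith) (by linarith)
    have hf2 : 0 ≤ (2*r+1) * (u 0 - 2) := mul_nonneg (by linarith) (by linarith)
    refine ⟨![2, 2*n+3, j], Or.inr ⟨j, hj0, ?_, rfl⟩, by norm_num, by norm_num, ?_, ?_, ?_, ?_⟩
    · rcases hj3 with h | h <;> rw [h] <;> linarith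
    · show 0 ≤ u 1 - (![2, 2*n+3, j] : Fin 3 → ℤ) 1
      simp only [Matrix.cons_val_one, Matrix.head_cons, Matrix.cons_val_zero]
      nlinarith
    · show 0 ≤ u 2 - (![2, 2*n+3, j] : Fin 3 → ℤ) 2
      simp only [Matrix.cons_val_two, Matrix.tail_cons, Matrix.head_cons]
      rcases hj3 with h | h <;> rw [h] <;> nlinarith
    · show 2 * (u 1 - (![2, 2*n+3, j] : Fin 3 → ℤ) 1) ≤
        (2*n+3) * (u 0 - (![2, 2*n+3, j] : Fin 3 → ℤ) 0)
      simp only [Matrix.cons_val_one, Matrix.head_cons, Matrix.cons_val_zero]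
      nlinarith
    · show (u 1 - (![2, 2*n+3, j] : Fin 3 → ℤ) 1) + (u 2 - (![2, 2*n+3, j] : Fin 3 → ℤ) 2) ≤
        (n+r+2) * (u 0 - (![2, 2*n+3, j] : Fin 3 → ℤ) 0)
      simp only [Matrix.cons_val_one, Matrix.head_cons, Matrix.cons_val_zero,
        Matrix.cons_val_two, Matrix.tail_cons]
      nlinarith
  · have hA' : 2 * u 1 + 1 ≤ (2*n+3) * u 0 := lt_of_le_of_ne h3 hA
    set y1 : ℤ := min (u 1) (n+1) with hy1
    set z1 : ℤ := max 0 (u 1 + u 2 - y1 - (n+r+2) * (u 0 - 1)) with hz1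
    have hy1a : y1 ≤ u 1 := min_le_left _ _
    have hy1b : y1 ≤ n+1 := min_le_right _ _
    have hy1c : y1 = u 1 ∨ y1 = n+1 := min_choice _ _
    have hy1d : 0 ≤ y1 := le_min hy0 (by linarith)
    have hz1a : 0 ≤ z1 := le_max_left _ _
    have hz1b : u 1 + u 2 - y1 - (n+r+2) * (u 0 - 1) ≤ z1 := le_max_right _ _
    have hz1c : z1 = 0 ∨ z1 = u 1 + u 2 - y1 - (n+r+2) * (u 0 - 1) := max_choice _ _
    have hf1 : 0 ≤ (2*n+3) * (u 0 - 1) := mul_nonneg (by linarith) (by linarith)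
    have hf2 : 0 ≤ (2*r+1) * (u 0 - 1) := mul_nonneg (by linarith) (by linarith)
    have hf3 : 0 ≤ (n+r+2) * (u 0 - 1) := mul_nonneg (by linarith) (by linarith)
    refine ⟨![1, y1, z1], Or.inl ⟨rfl, ?_, ?_, ?_, ?_⟩, by norm_num, by norm_num, ?_, ?_, ?_, ?_⟩
    · simpa using hy1d
    · simpa using hy1b
    · simpa using hz1a
    · show z1 ≤ n + r + 2 - (![1, y1, z1] : Fin 3 → ℤ) 1
      simp only [Matrix.cons_val_one, Matrix.head_cons, Matrix.cons_val_zero]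
      rcases hz1c with h | h <;> rw [h] <;> nlinarith
    · show 0 ≤ u 1 - (![1, y1, z1] : Fin 3 → ℤ) 1
      simp only [Matrix.cons_val_one, Matrix.head_cons, Matrix.cons_val_zero]
      linarith
    · show 0 ≤ u 2 - (![1, y1, z1] : Fin 3 → ℤ) 2
      simp only [Matrix.cons_val_two, Matrix.tail_cons, Matrix.head_cons]
      rcases hz1c with h | h
      · rw [h]; linarith
      · rw [h]
        rcases hy1c with h' | h' <;> rw [h'] <;> nlinarith
    · show 2 * (u 1 - (![1, y1, z1] : Fin 3 → ℤ) 1) ≤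
        (2*n+3) * (u 0 - (![1, y1, z1] : Fin 3 → ℤ) 0)
      simp only [Matrix.cons_val_one, Matrix.head_cons, Matrix.cons_val_zero]
      rcases hy1c with h' | h' <;> rw [h'] <;> nlinarith
    · show (u 1 - (![1, y1, z1] : Fin 3 → ℤ) 1) + (u 2 - (![1, y1, z1] : Fin 3 → ℤ) 2) ≤
        (n+r+2) * (u 0 - (![1, y1, z1] : Fin 3 → ℤ) 0)
      simp only [Matrix.cons_val_one, Matrix.head_cons, Matrix.cons_val_zero,
        Matrix.cons_val_two, Matrix.tail_cons]
      nlinarith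

lemma T_subset_closure {n r : ℤ} (hn : 2 ≤ n) (hr : 1 ≤ r) {u : Fin 3 → ℤ}
    (hu : inT n r u) : u ∈ AddSubmonoid.closure (Bset n r) := by
  obtain ⟨k, hk⟩ : ∃ k : ℕ, (u 0).toNat ≤ k := ⟨(u 0).toNat, le_refl _⟩
  induction k generalizing u with
  | zero =>
    have hx0 : 0 ≤ u 0 := inT_x_nonneg hn hu
    have h0 : u 0 = 0 := by omega
    rw [inT_zero hu h0]
    exact zero_mem _
  | succ k ih =>
    have hx0 : 0 ≤ u 0 := inT_x_nonneg hn hu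
    by_cases h0 : u 0 = 0
    · rw [inT_zero hu h0]; exact zero_mem _
    · obtain ⟨a, haB, ha1, ha2, hsub⟩ := sub_step hn hr hu (by omega)
      have heq : u = a + (u - a) := by ring
      rw [heq]
      refine add_mem (AddSubmonoid.subset_closure haB) (ih hsub ?_)
      have hx0' : 0 ≤ (u - a) 0 := inT_x_nonneg hn hsub
      have hsub0 : (u - a) 0 = u 0 - a 0 := rfl
      omega

theorem B_even_sigma2_hilbert_basis (n r : ℤ) (hn : 2 ≤ n) (hr : 1 ≤ r) :
    let σ₂ := coneOf
      ![![1, 0, 0], ![1, 0, n + r + 2], ![2, 2 * n + 3, 0], ![2, 2 * n + 3, 2 * r + 1]]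
    let S := latticePoints σ₂
    let B : Set (Fin 3 → ℤ) :=
      { u | u 0 = 1 ∧ 0 ≤ u 1 ∧ u 1 ≤ n + 1 ∧ 0 ≤ u 2 ∧ u 2 ≤ n + r + 2 - u 1 } ∪
      { u | ∃ j : ℤ, 0 ≤ j ∧ j ≤ 2 * r + 1 ∧ u = ![2, 2 * n + 3, j] }
    hilbertBasis S = B ∧ (AddSubmonoid.closure B : Set (Fin 3 → ℤ)) = S := by
  intro σ₂ S B
  have hBeq : B = Bset n r := rfl
  have hBS : B ⊆ S := by
    rintro u (h | ⟨j, hj0, hj1, rfl⟩)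
    · exact memS_of_B1 hn hr h
    · exact memS_of_B2 hn hr hj0 hj1
  have hST : ∀ u ∈ S, inT n r u := fun u hu => S_subset_T hn hr hu
  have hS0 : (0 : Fin 3 → ℤ) ∈ S := by
    refine ⟨0, fun i => le_refl 0, ?_⟩
    funext j
    simp [toR]
  have hSadd : ∀ a b : Fin 3 → ℤ, a ∈ S → b ∈ S → a + b ∈ S := by
    rintro a b ⟨c, hc, hca⟩ ⟨d, hd, hdb⟩
    refine ⟨c + d, fun i => add_nonneg (hc i) (hd i), ?_⟩
    have h1 : toR (a + b) = toR a + toR b := by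
      funext j; simp [toR]
    rw [h1, hca, hdb, ← Finset.sum_add_distrib]
    exact Finset.sum_congr rfl (fun i _ => by rw [Pi.add_apply, add_smul])
  let S' : AddSubmonoid (Fin 3 → ℤ) :=
    { carrier := S, zero_mem' := hS0, add_mem' := fun ha hb => hSadd _ _ ha hb }
  have hclS : (AddSubmonoid.closure B : Set (Fin 3 → ℤ)) ⊆ S := by
    intro x hx
    exact (AddSubmonoid.closure_le (S := S')).mpr hBS hx
  have hTcl : ∀ u : Fin 3 → ℤ, inT n r u → u ∈ AddSubmonoid.closure B := by
    intro u hu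
    rw [hBeq]
    exact T_subset_closure hn hr hu
  have hTS : ∀ u : Fin 3 → ℤ, inT n r u → u ∈ S := fun u hu => hclS (hTcl u hu)
  constructor
  · ext u
    constructor
    · rintro ⟨huS, hune, hirr⟩
      have huT := hST u huS
      obtain ⟨hy0, hz0, h3, h4⟩ := huT
      have hx0 : 0 ≤ u 0 := inT_x_nonneg hn ⟨hy0, hz0, h3, h4⟩
      by_cases h0 : u 0 = 0
      · exact absurd (inT_zero ⟨hy0, hz0, h3, h4⟩ h0) hune
      by_cases h1 : u 0 = 1
      · left
        rw [h1, mul_one] at h3 h4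
        exact ⟨h1, hy0, by omega, hz0, by omega⟩
      · have hx2 : 2 ≤ u 0 := by omega
        obtain ⟨a, haB, ha1, ha2, hsub⟩ := sub_step hn hr ⟨hy0, hz0, h3, h4⟩ (by omega)
        have haB' : a ∈ B := by rw [hBeq]; exact haB
        have haS : a ∈ S := hBS haB'
        have hbS : u - a ∈ S := hTS _ hsub
        have heq : u = a + (u - a) := by ring
        rcases hirr a (u - a) haS hbS heq with h | h
        · exfalso; rw [h] at ha1; simp at ha1
        · have hua : u = a := sub_eq_zero.mp h
          rcases haB with hB1 | ⟨j, hj0, hj1, haj⟩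
          · exfalso
            have : u 0 = 1 := by rw [hua]; exact hB1.1
            omega
          · exact Or.inr ⟨j, hj0, hj1, hua.trans haj⟩
    · rintro (⟨h0, hy0, hyn, hz0, hzm⟩ | ⟨j, hj0, hj1, rfl⟩)
      · refine ⟨hBS (Or.inl ⟨h0, hy0, hyn, hz0, hzm⟩), ?_, ?_⟩
        · intro hzero
          rw [hzero] at h0
          simp at h0
        · intro a b haS hbS heq
          have haT := hST a haS
          have hbT := hST b hbS
          have ha0 := inT_x_nonneg hn haT
          have hb0 := inT_x_nonneg hn hbT
          have hc0 := congrFun heq 0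
          rw [Pi.add_apply, h0] at hc0
          have : a 0 = 0 ∨ b 0 = 0 := by omega
          rcases this with h | h
          · exact Or.inl (inT_zero haT h)
          · exact Or.inr (inT_zero hbT h)
      · refine ⟨hBS (Or.inr ⟨j, hj0, hj1, rfl⟩), ?_, ?_⟩
        · intro hzero
          have := congrFun hzero 0
          norm_num at this
        · intro a b haS hbS heq
          have haT := hST a haS
          have hbT := hST b hbS
          have ha0 := inT_x_nonneg hn haT
          have hb0 := inT_x_nonneg hn hbT
          have hc0 := congrFun heq 0
          rw [Pi.add_apply] at hc0
          norm_num at hc0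
          by_cases hA : a 0 = 0
          · exact Or.inl (inT_zero haT hA)
          by_cases hB : b 0 = 0
          · exact Or.inr (inT_zero hbT hB)
          exfalso
          have ha1 : a 0 = 1 := by omega
          have hb1 : b 0 = 1 := by omega
          have hc1 := congrFun heq 1
          rw [Pi.add_apply] at hc1
          norm_num at hc1
          have haM : 2 * a 1 ≤ 2*n+3 := by
            have := haT.2.2.1
            rw [ha1, mul_one] at this
            exact this
          have hbM : 2 * b 1 ≤ 2*n+3 := by
            have := hbT.2.2.1
            rw [hb1, mul_one] at this
            exact this
          omega
  · exact subset_antisymm hclS (fun u hu => hTcl u (hST u hu))
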